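/- Let C_{HL,b}(α) = sup over measurable sets E ⊆ ℝⁿ with 0 < |E| < ∞ of (1/|E|)·|{x ∈ ℝⁿ : M_{HL,b} χ_E(x) > α}|. There exist a constant c_n > 0 depending only on n and a threshold α₀ ∈ (0,1) such that for all α ∈ (α₀, 1), C_{HL,b}(α) − 1 ≥ c_n · (1/α − 1)^{2/(n+1)}. -/

import Mathlib

open MeasureTheory Set Filter
open scoped ENNReal

/-- The uncentered Hardy–Littlewood maximal operator with respect to
Euclidean balls on `ℝⁿ`. -/
noncomputable def MHLb (n : ℕ) (f : EuclideanSpace ℝ (Fin n) → ℝ≥0∞)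
    (x : EuclideanSpace ℝ (Fin n)) : ℝ≥0∞ :=
  ⨆ (z : EuclideanSpace ℝ (Fin n)) (r : ℝ) (_ : 0 < r) (_ : x ∈ Metric.ball z r),
    (∫⁻ y in Metric.ball z r, f y) / volume (Metric.ball z r)

/-- The sharp Tauberian constant `C_{HL,b}(α)` of the uncentered
Hardy–Littlewood maximal operator with respect to balls. -/
noncomputable def CHLb (n : ℕ) (α : ℝ) : ℝ≥0∞ :=
  ⨆ (E : Set (EuclideanSpace ℝ (Fin n))) (_ : MeasurableSet E)
    (_ : 0 < volume E) (_ : volume E < ⊤),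
    volume {x : EuclideanSpace ℝ (Fin n) |
      MHLb n (E.indicator 1) x > ENNReal.ofReal α} / volume E

lemma box_volume (m : ℕ) (lo hi : Fin (m+1) → ℝ) :
    volume ((MeasurableEquiv.toLp 2 (Fin (m+1) → ℝ)).symm ⁻¹'
      (Set.pi univ fun i => Icc (lo i) (hi i)))
      = ∏ i, ENNReal.ofReal (hi i - lo i) := by
  rw [(EuclideanSpace.volume_preserving_symm_measurableEquiv_toLp _).measure_preimage
    ((MeasurableSet.univ_pi fun i => measurableSet_Icc).nullMeasurableSet)]
  rw [volume_pi_pi]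
  simp [Real.volume_Icc]

lemma subset_box (m : ℕ) (t : ℝ) (ht0 : 0 < t) (ht : t ≤ 1/6) :
    Metric.ball ((1/2 + t) • EuclideanSpace.single (0 : Fin (m+1)) (1:ℝ)) (1/2)
      \ Metric.ball 0 1
    ⊆ (MeasurableEquiv.toLp 2 (Fin (m+1) → ℝ)).symm ⁻¹' (Set.pi univ fun i =>
        Icc (if i = 0 then 1 - 2*t else -Real.sqrt (3*t))
            (if i = 0 then 1 + t else Real.sqrt (3*t))) := by
  intro y ⟨hyB, hyE⟩
  rw [Metric.mem_ball, EuclideanSpace.dist_eq] at hyB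
  have h1 : ∑ i, dist (y i) (((1/2 + t) • EuclideanSpace.single (0 : Fin (m+1)) (1:ℝ)) i) ^ 2
      < (1/2)^2 := by
    have := (Real.sqrt_lt' (by norm_num : (0:ℝ) < 1/2)).mp hyB
    linarith
  have h2 : 1 ≤ ∑ i, (y i) ^ 2 := by
    have hn : 1 ≤ ‖y‖ := by
      simpa [Metric.mem_ball, dist_zero_right, not_lt] using hyE
    have h0 : (0:ℝ) ≤ ∑ i, (y i)^2 := Finset.sum_nonneg fun i _ => sq_nonneg _
    calc (1:ℝ) = 1^2 := by norm_num
    _ ≤ ‖y‖^2 := by nlinarith [norm_nonneg y]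
    _ = ∑ i, (y i)^2 := by
        rw [EuclideanSpace.norm_eq, Real.sq_sqrt (by positivity)]
        simp [sq_abs]
  have hc : ∀ i : Fin (m+1), ((1/2 + t) • EuclideanSpace.single (0 : Fin (m+1)) (1:ℝ)) i
      = if i = 0 then 1/2 + t else 0 := by
    intro i
    simp [EuclideanSpace.single_apply]
  set P : ℝ := ∑ j : Fin m, (y j.succ)^2 with hPdef
  have hP0 : 0 ≤ P := Finset.sum_nonneg fun i _ => sq_nonneg _
  have h1' : (y 0 - (1/2 + t))^2 + P < 1/4 := by
    have e1 : ∀ i, dist (y i) (((1/2 + t) • EuclideanSpace.single (0 : Fin (m+1)) (1:ℝ)) i) ^ 2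
        = (y i - (if i = 0 then 1/2 + t else 0))^2 := by
      intro i; rw [hc, Real.dist_eq, sq_abs]
    rw [Finset.sum_congr rfl fun i _ => e1 i, Fin.sum_univ_succ] at h1
    simp only [if_pos rfl, if_true, eq_self_iff_true, Fin.succ_ne_zero, if_neg, sub_zero,
      if_false] at h1
    linarith
  have h2' : 1 ≤ (y 0)^2 + P := by
    rw [Fin.sum_univ_succ] at h2
    linarith
  have hA : 1 - 2*t ≤ y 0 := by nlinarith
  have hB : y 0 ≤ 1 + t := by nlinarith
  have hy0a : 1/2 - 3*t ≤ y 0 - (1/2 + t) := by linarith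
  have hC : P ≤ 3*t := by
    have h36 : (1/2 - 3*t)^2 ≤ (y 0 - (1/2+t))^2 :=
      pow_le_pow_left₀ (by linarith) hy0a 2
    nlinarith
  intro i _
  show y i ∈ Icc _ _
  by_cases hi : i = 0
  · subst hi; simp [mem_Icc, hA, hB]
  · simp only [if_neg hi, mem_Icc, ← abs_le]
    have hisucc : y i ^ 2 ≤ P := by
      have : i = (i.pred hi).succ := (Fin.succ_pred i hi).symm
      rw [this]
      exact Finset.single_le_sum (f := fun j : Fin m => (y j.succ)^2)
        (fun j _ => sq_nonneg _) (Finset.mem_univ _)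
    calc |y i| = Real.sqrt ((y i)^2) := (Real.sqrt_sq_eq_abs _).symm
    _ ≤ Real.sqrt (3*t) := Real.sqrt_le_sqrt (by linarith)

lemma vbad_rot (m : ℕ) (a : ℝ) (p : EuclideanSpace ℝ (Fin (m+1))) (hp : ‖p‖ = 1) :
    volume (Metric.ball (a • p) (1/2) \ Metric.ball 0 1)
      = volume (Metric.ball (a • EuclideanSpace.single (0 : Fin (m+1)) (1:ℝ)) (1/2)
          \ Metric.ball 0 1) := by
  set e₀ : EuclideanSpace ℝ (Fin (m+1)) := EuclideanSpace.single (0 : Fin (m+1)) (1:ℝ) with he₀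
  have hne : ‖p‖ = ‖e₀‖ := by rw [hp, he₀, EuclideanSpace.norm_single, norm_one]
  set f := Submodule.reflection (ℝ ∙ (p - e₀))ᗮ with hf
  have hfp : f p = e₀ := Submodule.reflection_sub hne
  have hfa : f (a • p) = a • e₀ := by rw [_root_.map_smul, hfp]
  have hpre : f ⁻¹' (Metric.ball (a • e₀) (1/2) \ Metric.ball 0 1)
      = Metric.ball (a • p) (1/2) \ Metric.ball 0 1 := by
    ext y
    simp only [mem_preimage, mem_diff, Metric.mem_ball, ← hfa]
    rw [show (0 : EuclideanSpace ℝ (Fin (m+1))) = f 0 by simp,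
      f.dist_map, f.dist_map]
    simp
  rw [← hpre]
  exact (f.measurePreserving).measure_preimage
    ((measurableSet_ball.diff measurableSet_ball).nullMeasurableSet)

lemma vbad_le (m : ℕ) (t : ℝ) (ht0 : 0 < t) (ht : t ≤ 1/6)
    (p : EuclideanSpace ℝ (Fin (m+1))) (hp : ‖p‖ = 1) :
    volume (Metric.ball ((1/2 + t) • p) (1/2) \ Metric.ball 0 1)
      ≤ ENNReal.ofReal (3*t * (2*Real.sqrt (3*t))^m) := by
  rw [vbad_rot m (1/2 + t) p hp]
  refine le_trans (measure_mono (subset_box m t ht0 ht)) ?_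
  rw [box_volume, Fin.prod_univ_succ]
  simp only [if_pos rfl, if_true, Fin.succ_ne_zero, if_neg, if_false]
  rw [show Real.sqrt (3*t) - -Real.sqrt (3*t) = 2 * Real.sqrt (3*t) from by ring,
    show (1:ℝ)+t-(1-2*t) = 3*t from by ring,
    Finset.prod_const, Finset.card_univ, Fintype.card_fin,
    ← ENNReal.ofReal_pow (by positivity), ← ENNReal.ofReal_mul (by positivity)]

set_option maxHeartbeats 2000000 in
theorem uncentered_ball_solyanik_lower (n : ℕ) (hn : 1 ≤ n) :
    ∃ c : ℝ, 0 < c ∧ ∃ α₀ ∈ Set.Ioo (0 : ℝ) 1, ∀ α ∈ Set.Ioo α₀ 1,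
      ENNReal.ofReal (c * (1 / α - 1) ^ (2 / ((n : ℝ) + 1))) ≤ CHLb n α - 1 := by
  obtain ⟨m, rfl⟩ : ∃ m, n = m + 1 := ⟨n - 1, by omega⟩
  have hV1top : volume (Metric.ball (0 : EuclideanSpace ℝ (Fin (m+1))) 1) ≠ ⊤ :=
    measure_ball_lt_top.ne
  have hV1pos : 0 < volume (Metric.ball (0 : EuclideanSpace ℝ (Fin (m+1))) 1) :=
    Metric.measure_ball_pos _ _ one_pos
  set v₁ : ℝ := (volume (Metric.ball (0 : EuclideanSpace ℝ (Fin (m+1))) 1)).toReal with hv₁def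
  have hv₁ : 0 < v₁ := ENNReal.toReal_pos hV1pos.ne' hV1top
  set v : ℝ := (1/2)^(m+1) * v₁ with hvdef
  have hv : 0 < v := by positivity
  have hsqrt3 : 0 < Real.sqrt 3 := Real.sqrt_pos.mpr (by norm_num)
  set K : ℝ := v / (2 * 2^m * Real.sqrt 3 ^ (m+2)) with hKdef
  have hK : 0 < K := by positivity
  have hsqrt6 : 0 < Real.sqrt (1/6) := Real.sqrt_pos.mpr (by norm_num)
  set δ : ℝ := min (1/2) (Real.sqrt (1/6) ^ (m+2) / K) with hδdef
  have hδ0 : 0 < δ := lt_min (by norm_num) (by positivity)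
  have hδ2 : δ ≤ 1/2 := min_le_left _ _
  set NN : ℝ := (m : ℝ) + 2 with hNNdef
  have hNN : 0 < NN := by positivity
  refine ⟨(K/2) ^ ((2:ℝ)/NN), Real.rpow_pos_of_pos (by positivity) _,
    1 - δ, ⟨by linarith, by linarith⟩, ?_⟩
  rintro α ⟨hα1, hα2⟩
  have hεpos : 0 < 1 - α := by linarith
  set ε : ℝ := 1 - α with hεdef
  have hεδ : ε < δ := by simp only [hεdef]; linarith
  have hαhalf : (1/2 : ℝ) ≤ α := by linarith
  have hαpos : (0:ℝ) < α := by linarith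
  have hKε : 0 < K * ε := by positivity
  set s : ℝ := (K * ε) ^ (NN⁻¹ : ℝ) with hsdef
  have hs : 0 < s := Real.rpow_pos_of_pos hKε _
  have hcast : ((m+2 : ℕ) : ℝ) = NN := by push_cast [hNNdef]; ring
  have hsN : s ^ (m+2) = K * ε := by
    rw [hsdef, ← Real.rpow_natCast ((K*ε) ^ (NN⁻¹:ℝ)) (m+2), ← Real.rpow_mul hKε.le,
      hcast, inv_mul_cancel₀ hNN.ne', Real.rpow_one]
  have hslt : s < Real.sqrt (1/6) := by
    refine lt_of_pow_lt_pow_left₀ (m+2) (Real.sqrt_nonneg _) ?_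
    rw [hsN]
    calc K * ε < K * δ := by exact mul_lt_mul_of_pos_left hεδ hK
    _ ≤ K * (Real.sqrt (1/6) ^ (m+2) / K) :=
        mul_le_mul_of_nonneg_left (min_le_right _ _) hK.le
    _ = Real.sqrt (1/6) ^ (m+2) := by field_simp
  set t : ℝ := s^2 with htdef
  have ht0 : 0 < t := by positivity
  have ht6 : t ≤ 1/6 := by
    have h := pow_lt_pow_left₀ hslt hs.le (by norm_num : 2 ≠ 0)
    rw [Real.sq_sqrt (by norm_num : (0:ℝ) ≤ 1/6)] at h
    linarith
  have ht2 : t < 1/2 := by linarith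
  -- the pointwise superlevel bound
  have hpoint : ∀ x : EuclideanSpace ℝ (Fin (m+1)), ‖x‖ < 1 + t →
      ENNReal.ofReal α < MHLb (m+1) ((Metric.ball 0 1).indicator 1) x := by
    intro x hx
    by_cases hx1 : ‖x‖ < 1
    · have hval : (∫⁻ y in Metric.ball (0 : EuclideanSpace ℝ (Fin (m+1))) 1,
          (Metric.ball (0 : EuclideanSpace ℝ (Fin (m+1))) 1).indicator 1 y)
          / volume (Metric.ball (0 : EuclideanSpace ℝ (Fin (m+1))) 1) = 1 := by
        rw [lintegral_indicator measurableSet_ball]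
        simp only [Pi.one_apply]
        rw [setLIntegral_one,
          Measure.restrict_apply measurableSet_ball, inter_self,
          ENNReal.div_self hV1pos.ne' hV1top]
      have h1 : ENNReal.ofReal α < 1 := by
        rw [ENNReal.ofReal_lt_one]; linarith
      refine lt_of_lt_of_le (hval ▸ h1) ?_
      unfold MHLb
      exact le_iSup_of_le 0 (le_iSup_of_le 1 (le_iSup_of_le one_pos
        (le_iSup_of_le (mem_ball_zero_iff.mpr hx1) le_rfl)))
    · push_neg at hx1
      have hx0 : x ≠ 0 := by
        intro h; rw [h, norm_zero] at hx1; linarith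
      have hnx : (0:ℝ) < ‖x‖ := by linarith
      set p : EuclideanSpace ℝ (Fin (m+1)) := ‖x‖⁻¹ • x with hpdef
      have hp : ‖p‖ = 1 := by
        rw [hpdef, norm_smul, norm_inv, norm_norm, inv_mul_cancel₀ hnx.ne']
      set a : ℝ := 1/2 + t with hadef
      set B := Metric.ball (a • p) (1/2) with hBdef
      have hxB : x ∈ B := by
        rw [hBdef, Metric.mem_ball]
        have hxp : x - a • p = (‖x‖ - a) • p := by
          rw [hpdef, smul_smul, smul_smul, sub_mul, mul_inv_cancel₀ hnx.ne', sub_smul,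
            one_smul]
        rw [dist_eq_norm, hxp, norm_smul, hp, mul_one, Real.norm_eq_abs,
          abs_of_pos (by rw [hadef]; linarith)]
        rw [hadef]; linarith
      have hVB : volume B = ENNReal.ofReal v := by
        rw [hBdef, Measure.addHaar_ball volume (a • p) (by norm_num : (0:ℝ) ≤ 1/2),
          finrank_euclideanSpace_fin, hvdef, ENNReal.ofReal_mul (by positivity),
          hv₁def, ENNReal.ofReal_toReal hV1top]
      have hVBtop : volume B ≠ ⊤ := by rw [hVB]; exact ENNReal.ofReal_ne_top
      have hVB0 : volume B ≠ 0 := by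
        rw [hVB]; exact (ENNReal.ofReal_pos.mpr hv).ne'
      have hbvol : 3*t*(2*Real.sqrt (3*t))^m = ε * v / 2 := by
        have h1 : Real.sqrt (3*t) = Real.sqrt 3 * s := by
          rw [htdef, Real.sqrt_mul (by norm_num : (0:ℝ) ≤ 3), Real.sqrt_sq hs.le]
        have h3 : (3:ℝ) = Real.sqrt 3^2 := (Real.sq_sqrt (by norm_num : (0:ℝ) ≤ 3)).symm
        have key : 3*t*(2*Real.sqrt (3*t))^m = 2^m * Real.sqrt 3 ^(m+2) * s^(m+2) := by
          rw [h1, htdef, mul_pow, mul_pow, pow_add, pow_add]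
          nth_rewrite 1 [h3]
          ring
        rw [key, hsN, hKdef]
        field_simp
      have hVbad : volume (B \ Metric.ball 0 1) ≤ ENNReal.ofReal (ε * v / 2) := by
        rw [hBdef, hadef]
        refine le_trans (vbad_le m t ht0 ht6 p hp) ?_
        exact ENNReal.ofReal_le_ofReal hbvol.le
      have hEB : (∫⁻ y in B, (Metric.ball (0 : EuclideanSpace ℝ (Fin (m+1))) 1).indicator 1 y)
          = volume (Metric.ball (0 : EuclideanSpace ℝ (Fin (m+1))) 1 ∩ B) := by
        rw [lintegral_indicator measurableSet_ball]
        simp only [Pi.one_apply]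
        rw [setLIntegral_one,
          Measure.restrict_apply measurableSet_ball]
      have hBsub : volume B ≤ volume (Metric.ball (0 : EuclideanSpace ℝ (Fin (m+1))) 1 ∩ B)
          + volume (B \ Metric.ball 0 1) := by
        refine le_trans (measure_mono ?_) (measure_union_le _ _)
        intro y hy
        by_cases h : y ∈ Metric.ball (0 : EuclideanSpace ℝ (Fin (m+1))) 1
        · exact Or.inl ⟨h, hy⟩
        · exact Or.inr ⟨hy, h⟩
      have hbadtop : volume (B \ Metric.ball 0 1) ≠ ⊤ :=
        (lt_of_le_of_lt hVbad ENNReal.ofReal_lt_top).ne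
      have hkey : ENNReal.ofReal α * volume B
          < volume (Metric.ball (0 : EuclideanSpace ℝ (Fin (m+1))) 1 ∩ B) := by
        rw [← ENNReal.add_lt_add_iff_right hbadtop]
        calc ENNReal.ofReal α * volume B + volume (B \ Metric.ball 0 1)
            ≤ ENNReal.ofReal (α * v) + ENNReal.ofReal (ε*v/2) := by
              rw [hVB, ← ENNReal.ofReal_mul hαpos.le]
              exact add_le_add le_rfl hVbad
        _ = ENNReal.ofReal (α*v + ε*v/2) := (ENNReal.ofReal_add (by positivity) (by positivity)).symm
        _ < ENNReal.ofReal v := by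
              rw [ENNReal.ofReal_lt_ofReal_iff hv]
              nlinarith
        _ = volume B := hVB.symm
        _ ≤ _ := hBsub
      have hdiv : ENNReal.ofReal α
          < (∫⁻ y in B, (Metric.ball (0 : EuclideanSpace ℝ (Fin (m+1))) 1).indicator 1 y)
            / volume B := by
        rw [hEB, ENNReal.lt_div_iff_mul_lt (Or.inl hVB0) (Or.inl hVBtop)]
        exact hkey
      refine lt_of_lt_of_le hdiv ?_
      unfold MHLb
      exact le_iSup_of_le (a • p) (le_iSup_of_le (1/2) (le_iSup_of_le (by norm_num)
        (le_iSup_of_le hxB le_rfl)))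
  -- from the pointwise bound to CHLb
  have hset : Metric.ball (0 : EuclideanSpace ℝ (Fin (m+1))) (1+t)
      ⊆ {x | MHLb (m+1) ((Metric.ball 0 1).indicator 1) x > ENNReal.ofReal α} :=
    fun x hx => hpoint x (mem_ball_zero_iff.mp hx)
  have hnum : ENNReal.ofReal (1+t) * volume (Metric.ball (0 : EuclideanSpace ℝ (Fin (m+1))) 1)
      ≤ volume {x | MHLb (m+1) ((Metric.ball 0 1).indicator 1) x > ENNReal.ofReal α} := by
    calc ENNReal.ofReal (1+t) * volume (Metric.ball (0 : EuclideanSpace ℝ (Fin (m+1))) 1)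
        ≤ ENNReal.ofReal ((1+t)^(m+1)) * volume (Metric.ball (0 : EuclideanSpace ℝ (Fin (m+1))) 1) := by
          refine mul_le_mul_left (ENNReal.ofReal_le_ofReal ?_) _
          exact le_self_pow₀ (by linarith) (Nat.succ_ne_zero m)
    _ = volume (Metric.ball (0 : EuclideanSpace ℝ (Fin (m+1))) (1+t)) := by
          rw [Measure.addHaar_ball volume 0 (by linarith : (0:ℝ) ≤ 1+t),
            finrank_euclideanSpace_fin]
    _ ≤ _ := measure_mono hset
  have hCH : ENNReal.ofReal (1+t) ≤ CHLb (m+1) α := by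
    have hratio : ENNReal.ofReal (1+t)
        ≤ volume {x | MHLb (m+1) ((Metric.ball 0 1).indicator 1) x > ENNReal.ofReal α}
          / volume (Metric.ball (0 : EuclideanSpace ℝ (Fin (m+1))) 1) := by
      rw [ENNReal.le_div_iff_mul_le (Or.inl hV1pos.ne') (Or.inl hV1top)]
      exact hnum
    refine le_trans hratio ?_
    unfold CHLb
    exact le_iSup_of_le (Metric.ball 0 1) (le_iSup_of_le measurableSet_ball
      (le_iSup_of_le hV1pos (le_iSup_of_le measure_ball_lt_top le_rfl)))
  have hT : ENNReal.ofReal t ≤ CHLb (m+1) α - 1 := by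
    refine ENNReal.le_sub_of_add_le_right ENNReal.one_ne_top ?_
    calc ENNReal.ofReal t + 1 = ENNReal.ofReal (1 + t) := by
          rw [← ENNReal.ofReal_one, ← ENNReal.ofReal_add ht0.le zero_le_one, add_comm]
    _ ≤ CHLb (m+1) α := hCH
  refine le_trans ?_ hT
  apply ENNReal.ofReal_le_ofReal
  have hinv : (0:ℝ) ≤ 1/α - 1 := by
    have := one_le_one_div hαpos hα2.le
    linarith
  have hexp : (2:ℝ)/((((m+1:ℕ)) : ℝ) + 1) = 2/NN := by
    rw [hNNdef]; push_cast; ring_nf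
  have h2ε : 1/α - 1 ≤ 2*ε := by
    rw [hεdef, div_sub_one hαpos.ne', div_le_iff₀ hαpos]
    nlinarith
  calc (K/2) ^ ((2:ℝ)/NN) * (1/α - 1) ^ ((2:ℝ)/((((m+1:ℕ)) : ℝ) + 1))
      = ((K/2) * (1/α - 1)) ^ ((2:ℝ)/NN) := by
        rw [hexp, ← Real.mul_rpow (by positivity) hinv]
  _ ≤ (K * ε) ^ ((2:ℝ)/NN) := by
        refine Real.rpow_le_rpow (by positivity) ?_ (by positivity)
        nlinarith
  _ = t := by
        rw [htdef, hsdef, show (2:ℝ)/NN = NN⁻¹ * 2 by ring,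
          Real.rpow_mul hKε.le, ← Real.rpow_natCast ((K*ε) ^ (NN⁻¹:ℝ)) 2]
        norm_num
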